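/- If f ∈ RL(p, r, ρ) is regularly log-periodic and ultimately monotone, then f is O-regularly varying, i.e. 0 < liminf_{x→∞} f(λx)/f(x) ≤ limsup_{x→∞} f(λx)/f(x) < ∞ for every λ > 0. -/

import Mathlib

open Filter Set Real Topology

/-- A function that is right-continuous at every point of `ℝ` has a continuity point
in every nonempty open set (Baire category argument). -/
lemma exists_continuityPt (q : ℝ → ℝ) (hq : ∀ x : ℝ, ContinuousWithinAt q (Set.Ici x) x)
    {s : Set ℝ} (hs : IsOpen s) (hne : s.Nonempty) : ∃ x ∈ s, ContinuousAt q x := by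
  classical
  set E : ℝ → ℕ → Set ℝ :=
    fun ε N => {x | ∀ y ∈ Icc x (x + 1/(N+1)), dist (q y) (q x) ≤ ε} with hE
  -- right-continuity gives, for every `x` and `δ > 0`, an interval `[x, v)` of `δ`-closeness
  have hrc : ∀ (x : ℝ) (δ : ℝ), 0 < δ → ∃ v, x < v ∧ ∀ w ∈ Ico x v, dist (q w) (q x) ≤ δ := by
    intro x δ hδ
    have h1 : {w | dist (q w) (q x) ≤ δ} ∈ 𝓝[Set.Ici x] x := by
      have := hq x (Metric.closedBall_mem_nhds (q x) hδ)
      simpa [Metric.closedBall, preimage, dist_comm] using this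
    rw [mem_nhdsGE_iff_exists_Ico_subset] at h1
    obtain ⟨u, hu, hsub⟩ := h1
    exact ⟨u, hu, fun w hw => hsub hw⟩
  -- the closed sets `closure (E ε N)` cover `ℝ`
  have hcov : ∀ ε : ℝ, 0 < ε → (⋃ N, closure (E ε N)) = univ := by
    intro ε hε
    rw [eq_univ_iff_forall]
    intro x
    obtain ⟨v, hv, hIco⟩ := hrc x ε hε
    obtain ⟨N, hN⟩ := exists_nat_one_div_lt (sub_pos.2 hv)
    refine mem_iUnion.2 ⟨N, subset_closure ?_⟩
    intro y hy
    exact hIco y ⟨hy.1, by push_cast at hN ⊢; linarith [hy.2]⟩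
  -- key: closure of `E ε N` still has the approximation property (with `2ε`, half length)
  have hkey : ∀ ε : ℝ, 0 < ε → ∀ N : ℕ, ∀ u ∈ closure (E ε N),
      ∀ y ∈ Icc u (u + 1/(2*(N+1))), dist (q y) (q u) ≤ 2*ε := by
    intro ε hε N u hu y hy
    have hNpos : (0:ℝ) < 1/(N+1) := by positivity
    refine le_of_forall_sub_le fun δ hδ => sub_le_iff_le_add.2 ?_
    obtain ⟨v, hv, hIco⟩ := hrc u δ hδ
    set τ : ℝ := min ((v - u)/2) (1/(2*(N+1))) with hτdef
    have hτpos : 0 < τ := by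
      apply lt_min (by linarith) (by positivity)
    have hτ1 : τ ≤ (v - u)/2 := min_le_left _ _
    have hτ2 : τ ≤ 1/(2*(N+1)) := min_le_right _ _
    obtain ⟨u', hu'E, hd⟩ := Metric.mem_closure_iff.1 hu τ hτpos
    rw [Real.dist_eq] at hd
    have habs := abs_lt.1 hd
    rcases le_or_gt u' u with hcase | hcase
    · -- approximant on the left
      have h1 : dist (q u) (q u') ≤ ε := by
        refine hu'E u ⟨hcase, ?_⟩
        have h2N : 1/(2*(N+1)) ≤ 1/((N:ℝ)+1) := by
          rw [div_le_div_iff₀ (by positivity) (by positivity)]; nlinarith [Nat.cast_nonneg (α := ℝ) N]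
        linarith [habs.2, habs.1]
      have h2 : dist (q y) (q u') ≤ ε := by
        refine hu'E y ⟨le_trans hcase hy.1, ?_⟩
        have h2N : τ + 1/(2*(N+1)) ≤ 1/((N:ℝ)+1) := by
          have : (2:ℝ) * (1/(2*(N+1))) = 1/((N:ℝ)+1) := by
            field_simp
          nlinarith [hτ2]
        linarith [hy.2, habs.1]
      calc dist (q y) (q u) ≤ dist (q y) (q u') + dist (q u) (q u') := dist_triangle_right _ _ _
        _ ≤ 2*ε + δ := by linarith
    · -- approximant on the right
      have hu'v : u' < v := by linarith [habs.2, hτ1]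
      have hqu' : dist (q u') (q u) ≤ δ := hIco u' ⟨hcase.le, hu'v⟩
      rcases le_or_gt u' y with hy2 | hy2
      · have h2 : dist (q y) (q u') ≤ ε := by
          refine hu'E y ⟨hy2, ?_⟩
          have h2N : 1/(2*((N:ℝ)+1)) ≤ 1/((N:ℝ)+1) := by
            rw [div_le_div_iff₀ (by positivity) (by positivity)]; nlinarith [Nat.cast_nonneg (α := ℝ) N]
          linarith [hy.2]
        calc dist (q y) (q u) ≤ dist (q y) (q u') + dist (q u') (q u) := dist_triangle _ _ _
          _ ≤ 2*ε + δ := by linarith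
      · have : dist (q y) (q u) ≤ δ := hIco y ⟨hy.1, lt_trans hy2 hu'v⟩
        linarith
  -- Baire: the open sets `U ε` are dense
  have hop : ∀ ε : ℝ, 0 < ε → Dense (⋃ N, interior (closure (E ε N))) := fun ε hε =>
    dense_iUnion_interior_of_closed (fun N => isClosed_closure) (hcov ε hε)
  have hG : Dense (⋂ k : ℕ, ⋃ N, interior (closure (E (1/(k+1)) N))) := by
    refine dense_iInter_of_isOpen (fun k => isOpen_iUnion fun N => isOpen_interior)
      (fun k => hop _ (by positivity))
  obtain ⟨x, hxs, hxG⟩ := hG.inter_open_nonempty s hs hne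
  refine ⟨x, hxs, ?_⟩
  rw [Metric.continuousAt_iff]
  intro ε hε
  obtain ⟨k, hk⟩ := exists_nat_one_div_lt (half_pos hε)
  have hx' : x ∈ ⋃ N, interior (closure (E (1/(k+1)) N)) := mem_iInter.1 hxG k
  obtain ⟨N, hxint⟩ := mem_iUnion.1 hx'
  obtain ⟨η, hη, hball⟩ := Metric.isOpen_iff.1 isOpen_interior x hxint
  have hNpos : (0:ℝ) < 1/(2*((N:ℝ)+1)) := by positivity
  refine ⟨min η (1/(2*(N+1))), lt_min hη hNpos, ?_⟩
  intro y hy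
  have hkpos : (0:ℝ) < 1/((k:ℝ)+1) := by positivity
  have h2k : 2 * (1/((k:ℝ)+1)) < ε := by push_cast at hk ⊢; linarith
  have hyd := hy
  rw [Real.dist_eq] at hyd
  have habs := abs_lt.1 (lt_of_lt_of_le hyd (min_le_right _ _))
  rcases le_or_gt x y with hxy | hxy
  · have hxcl : x ∈ closure (E (1/(k+1)) N) := interior_subset hxint
    have := hkey _ hkpos N x hxcl y ⟨hxy, by push_cast at habs ⊢; linarith [habs.2]⟩
    calc dist (q y) (q x) ≤ 2 * (1/(k+1)) := this
      _ < ε := h2k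
  · have hycl : y ∈ closure (E (1/(k+1)) N) := by
      apply interior_subset
      apply hball
      exact lt_of_lt_of_le hy (min_le_left _ _)
    have := hkey _ hkpos N y hycl x ⟨hxy.le, by push_cast at habs ⊢; linarith [habs.1]⟩
    rw [dist_comm] at this
    calc dist (q y) (q x) ≤ 2 * (1/(k+1)) := this
      _ < ε := h2k

/-- From right-continuity on `(0,∞)` get a genuine continuity point `> 1`. -/
lemma exists_continuityPt_pos (p : ℝ → ℝ)
    (hrc : ∀ x > (0:ℝ), ContinuousWithinAt p (Set.Ici x) x) :
    ∃ x₁ : ℝ, 1 < x₁ ∧ ContinuousAt p x₁ := by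
  set q : ℝ → ℝ := fun y => p (max y 1) with hqdef
  have hq : ∀ x : ℝ, ContinuousWithinAt q (Set.Ici x) x := by
    intro x
    rcases lt_or_ge x 1 with hx | hx
    · refine tendsto_const_nhds.congr' ?_
      filter_upwards [(eventually_lt_nhds hx).filter_mono nhdsWithin_le_nhds]
      intro y hy
      simp [hqdef, max_eq_right hy.le, max_eq_right hx.le]
    · have hx0 : (0:ℝ) < x := lt_of_lt_of_le zero_lt_one hx
      refine (hrc x hx0).congr ?_ ?_
      · intro y hy
        simp [hqdef, max_eq_left (le_trans hx hy)]
      · simp [hqdef, max_eq_left hx]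
  obtain ⟨x₁, hx₁s, hx₁c⟩ := exists_continuityPt q hq isOpen_Ioi
    (⟨2, by norm_num⟩ : (Set.Ioi (1:ℝ)).Nonempty)
  refine ⟨x₁, hx₁s, ?_⟩
  have heq : q =ᶠ[𝓝 x₁] p := by
    filter_upwards [eventually_gt_nhds hx₁s]
    intro y hy
    simp [hqdef, max_eq_left hy.le]
  exact hx₁c.congr heq

/-- Floor-of-logarithm bracketing. -/
lemma floor_logb_bracket {r x₁ x : ℝ} (hr : 1 < r) (hx₁ : 0 < x₁) (hx : x₁ ≤ x) :
    x₁ * r ^ (⌊Real.logb r (x/x₁)⌋₊) ≤ x ∧ x ≤ x₁ * r ^ (⌊Real.logb r (x/x₁)⌋₊ + 1) := by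
  have hr0 : (0:ℝ) < r := lt_trans zero_lt_one hr
  have hx0 : 0 < x := lt_of_lt_of_le hx₁ hx
  have hq1 : 1 ≤ x / x₁ := (one_le_div hx₁).2 hx
  have hq0 : 0 < x / x₁ := lt_of_lt_of_le zero_lt_one hq1
  have hlb : 0 ≤ Real.logb r (x/x₁) := Real.logb_nonneg hr hq1
  set n := ⌊Real.logb r (x/x₁)⌋₊ with hn
  have h1 : (n:ℝ) ≤ Real.logb r (x/x₁) := Nat.floor_le hlb
  have h2 : Real.logb r (x/x₁) < (n:ℝ)+1 := Nat.lt_floor_add_one _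
  constructor
  · have := Real.rpow_le_rpow_of_exponent_le hr.le h1
    rw [Real.rpow_logb hr0 (ne_of_gt hr) hq0, Real.rpow_natCast] at this
    calc x₁ * r ^ n ≤ x₁ * (x / x₁) := by
          exact mul_le_mul_of_nonneg_left this hx₁.le
      _ = x := by field_simp
  · have := Real.rpow_le_rpow_of_exponent_le hr.le h2.le
    rw [Real.rpow_logb hr0 (ne_of_gt hr) hq0] at this
    have h3 : r ^ ((n:ℝ)+1) = r ^ (n+1) := by
      rw [show ((n:ℝ)+1) = ((n+1 : ℕ) : ℝ) by push_cast; ring, Real.rpow_natCast]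
    rw [h3] at this
    calc x = x₁ * (x / x₁) := by field_simp
      _ ≤ x₁ * r ^ (n+1) := mul_le_mul_of_nonneg_left this hx₁.le

def MemP (r : ℝ) (p : ℝ → ℝ) : Prop :=
  (∀ x > (0:ℝ), 0 < p x) ∧
  (∃ M : ℝ, ∀ x > (0:ℝ), p x ≤ M) ∧
  (∀ x > (0:ℝ), ContinuousWithinAt p (Set.Ici x) x) ∧
  (∃ c > (0:ℝ), ∀ x ∈ Set.Icc (1:ℝ) r, c ≤ p x) ∧
  (∀ x > (0:ℝ), p (x * r) = p x)

def SlowlyVarying (l : ℝ → ℝ) : Prop :=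
  (∀ᶠ x in Filter.atTop, 0 < l x) ∧
  ∀ lam > (0:ℝ),
    Filter.Tendsto (fun x : ℝ => l (lam * x) / l x) Filter.atTop (nhds 1)

def MemRL (f : ℝ → ℝ) (p : ℝ → ℝ) (r ρ : ℝ) (l : ℝ → ℝ) : Prop :=
  ∀ x > (0:ℝ), ContinuousAt p x →
    Filter.Tendsto (fun n : ℕ => f (x * r^n) / ((x * r^n) ^ ρ * l (x * r^n)))
      Filter.atTop (nhds (p x))

def UltimatelyMonotone (f : ℝ → ℝ) : Prop :=
  ∃ x₀ : ℝ, MonotoneOn f (Set.Ici x₀) ∨ AntitoneOn f (Set.Ici x₀)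

theorem statement_2 (f p : ℝ → ℝ) (r ρ : ℝ) (l : ℝ → ℝ)
    (hf0 : ∀ x ≥ (0:ℝ), 0 ≤ f x) (hfm : Measurable f)
    (hr : 1 < r) (hl : SlowlyVarying l) (hp : MemP r p)
    (hRL : MemRL f p r ρ l) (hmon : UltimatelyMonotone f) :
    ∀ lam > (0:ℝ),
      (∃ c > (0:ℝ), ∀ᶠ x in Filter.atTop, c ≤ f (lam * x) / f x) ∧
      (∃ C : ℝ, ∀ᶠ x in Filter.atTop, f (lam * x) / f x ≤ C) := by
  obtain ⟨hp_pos, _, hp_rc, _, _⟩ := hp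
  obtain ⟨x₀, hcase⟩ := hmon
  obtain ⟨x₁, hx₁1, hx₁c⟩ := exists_continuityPt_pos p hp_rc
  have hx₁0 : (0:ℝ) < x₁ := lt_trans zero_lt_one hx₁1
  have hr0 : (0:ℝ) < r := lt_trans zero_lt_one hr
  set t : ℕ → ℝ := fun n => x₁ * r ^ n with htdef
  set g : ℝ → ℝ := fun y => y ^ ρ * l y with hgdef
  have htpos : ∀ n, 0 < t n := fun n => mul_pos hx₁0 (pow_pos hr0 n)
  have httop : Tendsto t atTop atTop :=
    (tendsto_pow_atTop_atTop_of_one_lt hr).const_mul_atTop hx₁0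
  have hP : 0 < p x₁ := hp_pos x₁ hx₁0
  have hA : Tendsto (fun n => f (t n) / g (t n)) atTop (𝓝 (p x₁)) := hRL x₁ hx₁0 hx₁c
  have hgev : ∀ᶠ y in atTop, 0 < g y := by
    filter_upwards [hl.1, eventually_gt_atTop (0:ℝ)] with y h1 h2
    exact mul_pos (Real.rpow_pos_of_pos h2 ρ) h1
  have hgpos : ∀ᶠ n in atTop, 0 < g (t n) := httop.eventually hgev
  have hfpos : ∀ᶠ n in atTop, 0 < f (t n) := by
    filter_upwards [hgpos, hA.eventually (eventually_gt_nhds (half_lt_self hP))] with n h1 h2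
    have := mul_pos (lt_trans (half_pos hP) h2) h1
    rwa [div_mul_cancel₀ _ (ne_of_gt h1)] at this
  have hB : ∀ j : ℕ, Tendsto (fun n => f (t (n+j)) / f (t n)) atTop (𝓝 ((r ^ j) ^ ρ)) := by
    intro j
    have hrj : (0:ℝ) < r ^ j := pow_pos hr0 j
    have hshift : Tendsto (fun n => f (t (n+j)) / g (t (n+j))) atTop (𝓝 (p x₁)) :=
      hA.comp (tendsto_add_atTop_nat j)
    have htj : ∀ n, t (n+j) = r^j * t n := by
      intro n; simp only [htdef]; rw [pow_add]; ring
    have hgr : Tendsto (fun n => g (t (n+j)) / g (t n)) atTop (𝓝 ((r^j) ^ ρ)) := by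
      have hls : Tendsto (fun n => l (r^j * t n) / l (t n)) atTop (𝓝 1) :=
        (hl.2 (r^j) hrj).comp httop
      have heq : ∀ n, g (t (n+j)) / g (t n) = (r^j) ^ ρ * (l (r^j * t n) / l (t n)) := by
        intro n
        rw [htj n]
        have h2 : (t n) ^ ρ ≠ 0 := ne_of_gt (Real.rpow_pos_of_pos (htpos n) ρ)
        simp only [hgdef]
        rw [Real.mul_rpow hrj.le (htpos n).le]
        calc (r^j)^ρ * (t n)^ρ * l (r^j * t n) / ((t n)^ρ * l (t n))
            = ((t n)^ρ * ((r^j)^ρ * l (r^j * t n))) / ((t n)^ρ * l (t n)) := by ring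
          _ = ((r^j)^ρ * l (r^j * t n)) / l (t n) := mul_div_mul_left _ _ h2
          _ = (r^j)^ρ * (l (r^j * t n) / l (t n)) := mul_div_assoc _ _ _
      have h3 : Tendsto (fun n => (r^j)^ρ * (l (r^j * t n) / l (t n))) atTop (𝓝 ((r^j)^ρ * 1)) :=
        tendsto_const_nhds.mul hls
      rw [mul_one] at h3
      exact h3.congr (fun n => (heq n).symm)
    have hprod : Tendsto
        (fun n => (f (t (n+j)) / g (t (n+j))) * (g (t (n+j)) / g (t n)) * (f (t n) / g (t n))⁻¹)
        atTop (𝓝 (p x₁ * ((r^j)^ρ) * (p x₁)⁻¹)) := (hshift.mul hgr).mul (hA.inv₀ (ne_of_gt hP))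
    have hlim : p x₁ * ((r^j)^ρ) * (p x₁)⁻¹ = (r^j)^ρ := by
      rw [mul_comm (p x₁), mul_assoc, mul_inv_cancel₀ (ne_of_gt hP), mul_one]
    rw [hlim] at hprod
    refine hprod.congr' ?_
    filter_upwards [hgpos, (tendsto_add_atTop_nat j).eventually hgpos, hfpos] with n h1 h2 h3
    rw [inv_div]
    field_simp
  have hB' : ∀ j : ℕ, Tendsto (fun n => f (t n) / f (t (n+j))) atTop (𝓝 (((r ^ j) ^ ρ)⁻¹)) := by
    intro j
    have := (hB j).inv₀ (ne_of_gt (Real.rpow_pos_of_pos (pow_pos hr0 j) ρ))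
    exact this.congr fun n => inv_div _ _
  intro lam hlam
  obtain ⟨k, hk⟩ := pow_unbounded_of_one_lt (max lam (1/lam)) hr
  have hk1 : lam ≤ r ^ k := le_trans (le_max_left _ _) hk.le
  have hk2 : 1 ≤ lam * r ^ k := by
    have h2 : 1/lam ≤ r^k := le_trans (le_max_right _ _) hk.le
    rw [div_le_iff₀ hlam] at h2
    linarith
  set L : ℝ := (r ^ (k+1)) ^ ρ with hLdef
  have hL : 0 < L := Real.rpow_pos_of_pos (pow_pos hr0 (k+1)) ρ
  have hx₀ev : ∀ᶠ n in atTop, x₀ ≤ t n := httop.eventually (eventually_ge_atTop x₀)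
  have hbig : ∀ᶠ n in atTop,
      (L/2 < f (t (n+(k+1))) / f (t n)) ∧ (f (t (n+(k+1))) / f (t n) < 2*L) ∧
      (L⁻¹/2 < f (t n) / f (t (n+(k+1)))) ∧ (f (t n) / f (t (n+(k+1))) < 2*L⁻¹) ∧
      0 < f (t n) ∧ x₀ ≤ t n := by
    have e1 := (hB (k+1)).eventually (eventually_gt_nhds (by linarith : L/2 < L))
    have e2 := (hB (k+1)).eventually (eventually_lt_nhds (by linarith : L < 2*L))
    have hLinv : 0 < L⁻¹ := inv_pos.2 hL
    have e3 := (hB' (k+1)).eventually (eventually_gt_nhds (half_lt_self hLinv))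
    have e4 := (hB' (k+1)).eventually (eventually_lt_nhds (by linarith : L⁻¹ < 2*L⁻¹))
    filter_upwards [e1, e2, e3, e4, hfpos, hx₀ev] with n a1 a2 a3 a4 a5 a6
    exact ⟨a1, a2, a3, a4, a5, a6⟩
  obtain ⟨N₁, hN₁⟩ := eventually_atTop.1 hbig
  set X₀ : ℝ := x₁ * r ^ (N₁ + k) with hX₀def
  have hsetup : ∀ x : ℝ, X₀ ≤ x → ∃ n m : ℕ, n = m + k ∧ N₁ ≤ m ∧
      t n ≤ x ∧ x ≤ t (n+1) ∧ t m ≤ lam * x ∧ lam * x ≤ t (n + (k+1)) ∧ 0 < x := by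
    intro x hx
    have hX₀x₁ : x₁ ≤ X₀ := le_mul_of_one_le_right hx₁0.le (one_le_pow₀ hr.le)
    have hxx₁ : x₁ ≤ x := le_trans hX₀x₁ hx
    have hx0 : 0 < x := lt_of_lt_of_le hx₁0 hxx₁
    obtain ⟨hn1, hn2⟩ := floor_logb_bracket hr hx₁0 hxx₁
    set n := ⌊Real.logb r (x/x₁)⌋₊ with hndef
    have hnge : N₁ + k ≤ n := by
      apply Nat.le_floor
      rw [Real.le_logb_iff_rpow_le hr (by positivity), Real.rpow_natCast, le_div_iff₀ hx₁0]
      calc r ^ (N₁+k) * x₁ = X₀ := by rw [hX₀def]; ring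
        _ ≤ x := hx
    refine ⟨n, n - k, by omega, by omega, hn1, hn2, ?_, ?_, hx0⟩
    · have hnk : n - k + k = n := by omega
      have h1 : t (n-k) * (lam * r ^ k) = lam * t n := by
        calc t (n-k) * (lam * r^k) = lam * (x₁ * r ^ (n-k+k)) := by
              simp only [htdef, pow_add]; ring
          _ = lam * t n := by rw [hnk]
      calc t (n-k) ≤ t (n-k) * (lam * r^k) := le_mul_of_one_le_right (htpos _).le hk2
        _ = lam * t n := h1
        _ ≤ lam * x := mul_le_mul_of_nonneg_left hn1 hlam.le
    · calc lam * x ≤ r ^ k * x := mul_le_mul_of_nonneg_right hk1 hx0.le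
        _ ≤ r ^ k * t (n+1) := mul_le_mul_of_nonneg_left hn2 (pow_pos hr0 k).le
        _ = t (n + (k+1)) := by simp only [htdef, pow_add]; ring
  have hbody : ∃ c > (0:ℝ), ∃ C : ℝ, ∀ x : ℝ, X₀ ≤ x →
      c ≤ f (lam*x)/f x ∧ f (lam*x)/f x ≤ C := by
    rcases hcase with hmono | hanti
    · refine ⟨L⁻¹/2, by positivity, 2*L, ?_⟩
      intro x hx
      obtain ⟨n, m, hnm, hmge, hn1, hn2, hA1, hA2, hx0⟩ := hsetup x hx
      have Hm := hN₁ m hmge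
      have Hn := hN₁ n (by omega)
      have Hn1 := hN₁ (n+1) (by omega)
      have Hnk := hN₁ (n+(k+1)) (by omega)
      have hx₀x : x₀ ≤ x := le_trans Hn.2.2.2.2.2 hn1
      have hx₀lx : x₀ ≤ lam * x := le_trans Hm.2.2.2.2.2 hA1
      have hf1 : f (t n) ≤ f x := hmono Hn.2.2.2.2.2 hx₀x hn1
      have hfx : 0 < f x := lt_of_lt_of_le Hn.2.2.2.2.1 hf1
      have hf2 : f x ≤ f (t (m+(k+1))) := by
        rw [show m + (k+1) = n + 1 from by omega]
        exact hmono hx₀x Hn1.2.2.2.2.2 hn2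
      have hf3 : f (t m) ≤ f (lam * x) := hmono Hm.2.2.2.2.2 hx₀lx hA1
      have hf4 : f (lam * x) ≤ f (t (n + (k+1))) := hmono hx₀lx Hnk.2.2.2.2.2 hA2
      constructor
      · have h5 : f (t m) / f (t (m + (k+1))) ≤ f (lam * x) / f x :=
          div_le_div₀ (hf0 _ (mul_nonneg hlam.le hx0.le)) hf3 hfx hf2
        exact le_trans Hm.2.2.1.le h5
      · have h5 : f (lam * x) / f x ≤ f (t (n + (k+1))) / f (t n) :=
          div_le_div₀ (hf0 _ (htpos _).le) hf4 Hn.2.2.2.2.1 hf1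
        exact le_trans h5 Hn.2.1.le
    · refine ⟨L/2, by positivity, 2*L⁻¹, ?_⟩
      intro x hx
      obtain ⟨n, m, hnm, hmge, hn1, hn2, hA1, hA2, hx0⟩ := hsetup x hx
      have Hm := hN₁ m hmge
      have Hn := hN₁ n (by omega)
      have Hn1 := hN₁ (n+1) (by omega)
      have Hnk := hN₁ (n+(k+1)) (by omega)
      have hx₀x : x₀ ≤ x := le_trans Hn.2.2.2.2.2 hn1
      have hx₀lx : x₀ ≤ lam * x := le_trans Hm.2.2.2.2.2 hA1
      have hf1 : f x ≤ f (t n) := hanti Hn.2.2.2.2.2 hx₀x hn1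
      have hf2 : f (t (m+(k+1))) ≤ f x := by
        rw [show m + (k+1) = n + 1 from by omega]
        exact hanti hx₀x Hn1.2.2.2.2.2 hn2
      have hfx : 0 < f x := lt_of_lt_of_le (by
        rw [show m + (k+1) = n + 1 from by omega]; exact Hn1.2.2.2.2.1) hf2
      have hf3 : f (lam * x) ≤ f (t m) := hanti Hm.2.2.2.2.2 hx₀lx hA1
      have hf4 : f (t (n + (k+1))) ≤ f (lam * x) := hanti hx₀lx Hnk.2.2.2.2.2 hA2
      constructor
      · have h5 : f (t (n + (k+1))) / f (t n) ≤ f (lam * x) / f x :=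
          div_le_div₀ (hf0 _ (mul_nonneg hlam.le hx0.le)) hf4 hfx hf1
        exact le_trans Hn.1.le h5
      · have hd : 0 < f (t (m+(k+1))) := by
          rw [show m + (k+1) = n + 1 from by omega]; exact Hn1.2.2.2.2.1
        have h5 : f (lam * x) / f x ≤ f (t m) / f (t (m + (k+1))) :=
          div_le_div₀ (hf0 _ (htpos _).le) hf3 hd hf2
        exact le_trans h5 Hm.2.2.2.1.le
  obtain ⟨c, hc, C, hCb⟩ := hbody
  refine ⟨⟨c, hc, ?_⟩, ⟨C, ?_⟩⟩
  · filter_upwards [eventually_ge_atTop X₀] with x hx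
    exact (hCb x hx).1
  · filter_upwards [eventually_ge_atTop X₀] with x hx
    exact (hCb x hx).2
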